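/- Let n ≥ 2 be an integer and F a field of characteristic p with p ≠ 2 and p dividing n + 1. Let E denote the (n+1)×(n+1) matrix over F all of whose entries equal 1, and let sl₀(n,F) denote the set of (n+1)×(n+1) matrices X over F with XE = EX = 0 and trace X = 0, which is a Lie subalgebra of the matrix Lie algebra gl(n+1,F) under the commutator bracket. Then E is a nonzero central element of sl₀(n,F), and sl₀(n,F) is not isomorphic as a Lie algebra over F to sl(n,F), the Lie algebra of trace-zero n×n matrices over F. -/

import Mathlib

attribute [local instance 100] LieRing.ofAssociativeRing

/-- Auxiliary: a trace-zero matrix commuting with all elementary matrices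
`stdBasisMatrix i j 1` (`j ≠ i`) is zero, provided `(n : F) ≠ 0` and `n ≥ 2`. -/
lemma central_matrix_eq_zero {n : ℕ} (hn : 2 ≤ n) {F : Type*} [Field F]
    (hnF : (n : F) ≠ 0)
    (X : Matrix (Fin n) (Fin n) F) (htr : X.trace = 0)
    (hc : ∀ (i j : Fin n), j ≠ i →
      X * Matrix.single i j 1 = Matrix.single i j 1 * X) :
    X = 0 := by
  have hn1 : 1 < n := hn
  have : Nontrivial (Fin n) := Fin.nontrivial_iff_two_le.mpr hn
  have i₀ : Fin n := ⟨0, by omega⟩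
  have hoff : ∀ i k : Fin n, k ≠ i → X k i = 0 := by
    intro i k hki
    obtain ⟨j, hj⟩ := exists_ne i
    have h := congrFun (congrFun (hc i j hj) k) j
    rw [Matrix.mul_single_apply_same,
      Matrix.single_mul_apply_of_ne _ _ _ _ _ hki] at h
    simpa using h
  have hdiag : ∀ i j : Fin n, X i i = X j j := by
    intro i j
    by_cases hij : j = i
    · rw [hij]
    · have h := congrFun (congrFun (hc i j hij) i) j
      rw [Matrix.mul_single_apply_same,
        Matrix.single_mul_apply_same] at h
      simpa using h
  have hd0 : ∀ i : Fin n, X i i = 0 := by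
    intro i
    have htr' : X.trace = (n : F) * X i i := by
      rw [Matrix.trace]
      have : ∀ j : Fin n, Matrix.diag X j = X i i := fun j => hdiag j i
      rw [Finset.sum_congr rfl (fun j _ => this j)]
      simp [mul_comm]
    rw [htr'] at htr
    exact (mul_eq_zero.mp htr).resolve_left hnF
  ext k l
  by_cases hkl : k = l
  · subst hkl; simpa using hd0 k
  · simpa using hoff l k hkl

theorem sl0_not_isomorphic_to_sl
    (n : ℕ) (hn : 2 ≤ n)
    {F : Type*} [Field F] (p : ℕ) [CharP F p]
    (hp0 : p ≠ 0) (hp2 : p ≠ 2) (hpn : p ∣ n + 1)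
    (E : Matrix (Fin (n + 1)) (Fin (n + 1)) F)
    (hE : ∀ i j, E i j = 1)
    (sl₀ : LieSubalgebra F (Matrix (Fin (n + 1)) (Fin (n + 1)) F))
    (hsl₀ : ∀ X : Matrix (Fin (n + 1)) (Fin (n + 1)) F,
      X ∈ sl₀ ↔ X * E = 0 ∧ E * X = 0 ∧ X.trace = 0) :
    E ≠ 0 ∧ E ∈ sl₀ ∧ (∀ X ∈ sl₀, ⁅E, X⁆ = 0) ∧
      IsEmpty (↥sl₀ ≃ₗ⁅F⁆ ↥(LieAlgebra.SpecialLinear.sl (Fin n) F)) := by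
  have hcharF : ((n : F) + 1) = 0 := by
    have := (CharP.cast_eq_zero_iff F p (n + 1)).mpr hpn
    push_cast at this
    exact this
  -- E * E = 0
  have hEE : E * E = 0 := by
    ext i j
    rw [Matrix.mul_apply]
    simp only [hE, one_mul, Finset.sum_const, Finset.card_univ, Fintype.card_fin,
      nsmul_eq_mul, Matrix.zero_apply]
    push_cast
    rw [hcharF]
    ring
  have htrE : E.trace = 0 := by
    rw [Matrix.trace]
    simp only [Matrix.diag, hE, Finset.sum_const, Finset.card_univ, Fintype.card_fin,
      nsmul_eq_mul, mul_one]
    push_cast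
    rw [hcharF]
  have hEne : E ≠ 0 := by
    intro h
    have : E 0 0 = 0 := by rw [h]; rfl
    rw [hE 0 0] at this
    exact one_ne_zero this
  have hEmem : E ∈ sl₀ := (hsl₀ E).mpr ⟨hEE, hEE, htrE⟩
  have hcentral : ∀ X ∈ sl₀, ⁅E, X⁆ = 0 := by
    intro X hX
    obtain ⟨hXE, hEX, -⟩ := (hsl₀ X).mp hX
    rw [Ring.lie_def, hEX, hXE, sub_zero]
  refine ⟨hEne, hEmem, hcentral, ?_⟩
  -- (n : F) ≠ 0
  have hnF : (n : F) ≠ 0 := by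
    intro h
    have hpd : p ∣ n := (CharP.cast_eq_zero_iff F p n).mp h
    have : p ∣ 1 := by
      have := Nat.dvd_sub hpn hpd
      simpa using this
    have hp1 : p = 1 := Nat.dvd_one.mp this
    have h1 : (1 : F) = 0 := by
      have := (CharP.cast_eq_zero_iff F p 1).mpr (by rw [hp1])
      simpa using this
    exact one_ne_zero h1
  constructor
  intro φ
  set e : ↥sl₀ := ⟨E, hEmem⟩ with he
  set Z := φ e with hZ
  -- Z commutes with all elementary matrices of sl
  have hZc : ∀ (i j : Fin n), j ≠ i →
      (Z : Matrix (Fin n) (Fin n) F) * Matrix.single i j 1 =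
        Matrix.single i j 1 * (Z : Matrix (Fin n) (Fin n) F) := by
    intro i j hij
    have hb : ⁅Z, LieAlgebra.SpecialLinear.single i j hij.symm (1 : F)⁆ = 0 := by
      have h0 := hcentral (↑(φ.symm (LieAlgebra.SpecialLinear.single i j hij.symm (1 : F))))
        (φ.symm (LieAlgebra.SpecialLinear.single i j hij.symm (1 : F))).2
      have hbr : ⁅e, φ.symm (LieAlgebra.SpecialLinear.single i j hij.symm (1 : F))⁆ = 0 :=
        Subtype.ext (by simpa [LieSubalgebra.coe_bracket] using h0)
      have hmz : φ (0 : ↥sl₀) = 0 := by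
        rw [← LieEquiv.coe_toLinearEquiv]
        exact (φ : ↥sl₀ ≃ₗ[F] ↥(LieAlgebra.SpecialLinear.sl (Fin n) F)).map_zero
      calc ⁅Z, LieAlgebra.SpecialLinear.single i j hij.symm (1 : F)⁆
          = φ ⁅e, φ.symm (LieAlgebra.SpecialLinear.single i j hij.symm (1 : F))⁆ := by
            rw [LieEquiv.map_lie, hZ, LieEquiv.apply_symm_apply]
        _ = 0 := by rw [hbr, hmz]
    have hb' := congrArg Subtype.val hb
    rw [LieAlgebra.SpecialLinear.sl_bracket] at hb'
    have : (Z : Matrix (Fin n) (Fin n) F) * (LieAlgebra.SpecialLinear.single i j hij.symm (1 : F) : Matrix (Fin n) (Fin n) F)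
        = (LieAlgebra.SpecialLinear.single i j hij.symm (1 : F) : Matrix (Fin n) (Fin n) F) * (Z : Matrix (Fin n) (Fin n) F) :=
      sub_eq_zero.mp hb'
    simpa [LieAlgebra.SpecialLinear.val_single] using this
  have htrZ : (Z : Matrix (Fin n) (Fin n) F).trace = 0 := Z.2
  have hZ0 : (Z : Matrix (Fin n) (Fin n) F) = 0 :=
    central_matrix_eq_zero hn hnF _ htrZ hZc
  have hZz : Z = 0 := Subtype.ext hZ0
  have hmz : φ (0 : ↥sl₀) = 0 := by
    rw [← LieEquiv.coe_toLinearEquiv]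
    exact (φ : ↥sl₀ ≃ₗ[F] ↥(LieAlgebra.SpecialLinear.sl (Fin n) F)).map_zero
  have he0 : e = 0 := EquivLike.injective φ (hZz.trans hmz.symm)
  exact hEne (congrArg Subtype.val he0)
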